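/- Define the real function b on [0,∞) by b(x) = 0 for 0 ≤ x ≤ e^{−3} and b(x) = x·log(x²) + 3x + 4e^{−3} − e^{−6}/x for x ≥ e^{−3}; extend it to the complex plane by B(z) = (z/|z|)·b(|z|) for z ≠ 0 and B(0) = 0. For each positive integer n define b_n : ℂ → ℂ by b_n(z) = B(z) if |z| ≤ n and b_n(z) = (z/n)·b(n) if |z| ≥ n. Then there exists a constant C > 0, independent of n, such that for all positive integers n and all complex numbers u and v, |Im[(b_n(u) − b_n(v))·conj(u − v)]| ≤ C·|u − v|². -/

import Mathlib

noncomputable def aa : ℝ := Real.exp (-3)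

lemma aa_pos : 0 < aa := Real.exp_pos _

lemma aa_lt_one : aa < 1 := Real.exp_lt_one_iff.mpr (by norm_num)

noncomputable def ff (x : ℝ) : ℝ := 2 * Real.log x + 4 * aa / x - aa ^ 2 / x ^ 2

lemma ff_aa : ff aa = -3 := by
  have h := aa_pos
  unfold ff aa
  rw [Real.log_exp]
  field_simp
  ring

lemma ff_hasDeriv {x : ℝ} (hx : 0 < x) :
    HasDerivAt ff (2 * (x - aa) ^ 2 / x ^ 3) x := by
  have h1 : HasDerivAt (fun y : ℝ => 2 * Real.log y) (2 * x⁻¹) x :=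
    (Real.hasDerivAt_log hx.ne').const_mul 2
  have h2 : HasDerivAt (fun y : ℝ => 4 * aa * y ^ (-1 : ℤ))
      (4 * aa * ((-1 : ℤ) * x ^ (-2 : ℤ))) x := by
    simpa using ((hasDerivAt_zpow (-1) x (Or.inl hx.ne')).const_mul (4 * aa))
  have h3 : HasDerivAt (fun y : ℝ => aa ^ 2 * y ^ (-2 : ℤ))
      (aa ^ 2 * ((-2 : ℤ) * x ^ (-3 : ℤ))) x := by
    simpa using ((hasDerivAt_zpow (-2) x (Or.inl hx.ne')).const_mul (aa ^ 2))
  have h := (h1.add h2).sub h3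
  have heq : ff =ᶠ[nhds x] fun y => 2 * Real.log y + 4 * aa * y ^ (-1 : ℤ) - aa ^ 2 * y ^ (-2 : ℤ) := by
    filter_upwards [eventually_ne_nhds hx.ne'] with y hy
    unfold ff
    rw [zpow_neg, zpow_one, zpow_neg, show ((2:ℤ)) = ((2:ℕ):ℤ) from rfl, zpow_natCast,
      div_eq_mul_inv, div_eq_mul_inv]
  have hval : 2 * x⁻¹ + 4 * aa * ((-1 : ℤ) * x ^ (-2 : ℤ)) - aa ^ 2 * ((-2 : ℤ) * x ^ (-3 : ℤ))
      = 2 * (x - aa) ^ 2 / x ^ 3 := by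
    rw [zpow_neg, zpow_neg, show ((2:ℤ)) = ((2:ℕ):ℤ) from rfl,
      show ((3:ℤ)) = ((3:ℕ):ℤ) from rfl, zpow_natCast, zpow_natCast]
    push_cast
    have hx0 : x ≠ 0 := hx.ne'
    field_simp
    ring
  rw [← hval]
  exact h.congr_of_eventuallyEq heq

lemma ff_mono : MonotoneOn ff (Set.Ici aa) := by
  apply monotoneOn_of_deriv_nonneg (convex_Ici aa)
  · intro x hx
    exact (ff_hasDeriv (lt_of_lt_of_le aa_pos hx)).continuousAt.continuousWithinAt
  · intro x hx
    rw [interior_Ici] at hx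
    exact (ff_hasDeriv (aa_pos.trans hx)).differentiableAt.differentiableWithinAt
  · intro x hx
    rw [interior_Ici] at hx
    rw [(ff_hasDeriv (aa_pos.trans hx)).deriv]
    exact div_nonneg (by positivity) (pow_pos (aa_pos.trans hx) 3).le

lemma ff_bound {s r : ℝ} (hs : aa ≤ s) (hsr : s ≤ r) :
    (ff r - ff s) * s ≤ 2 * (r - s) := by
  have hs0 : 0 < s := lt_of_lt_of_le aa_pos hs
  have hr0 : 0 < r := hs0.trans_le hsr
  have hlog : Real.log r - Real.log s ≤ r / s - 1 := by
    have h := Real.log_le_sub_one_of_pos (div_pos hr0 hs0)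
    rwa [Real.log_div hr0.ne' hs0.ne'] at h
  have expand : (ff r - ff s) * s =
      2 * (Real.log r - Real.log s) * s + aa * (r - s) * (aa * (r + s) - 4 * r * s) / (r ^ 2 * s) := by
    unfold ff
    field_simp
    ring
  have t1 : 2 * (Real.log r - Real.log s) * s ≤ 2 * (r - s) := by
    have h := mul_le_mul_of_nonneg_right hlog hs0.le
    have h2 : (r / s - 1) * s = r - s := by field_simp
    nlinarith
  have t2 : aa * (r - s) * (aa * (r + s) - 4 * r * s) / (r ^ 2 * s) ≤ 0 := by
    apply div_nonpos_of_nonpos_of_nonneg _ (by positivity)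
    have h1 : aa * r ≤ s * r := mul_le_mul_of_nonneg_right hs hr0.le
    have h2 : aa * s ≤ r * s := mul_le_mul_of_nonneg_right (hs.trans hsr) hs0.le
    have h3 : 0 ≤ r - s := by linarith
    nlinarith [aa_pos, mul_nonneg h3 (by nlinarith : (0:ℝ) ≤ 4 * r * s - aa * (r + s))]
  linarith [expand, t1, t2]

noncomputable def HH (x : ℝ) : ℝ := if x ≤ aa then 0 else ff x + 3

lemma HH_eq {x : ℝ} (hx : aa ≤ x) : HH x = ff x + 3 := by
  unfold HH
  rcases eq_or_lt_of_le hx with h | h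
  · rw [if_pos h.symm.le, ← h, ff_aa]; ring
  · rw [if_neg (not_le.mpr h)]

lemma HH_eq0 {x : ℝ} (hx : x ≤ aa) : HH x = 0 := if_pos hx

lemma HH_key {s r : ℝ} (hs : 0 ≤ s) (hsr : s ≤ r) :
    0 ≤ HH r - HH s ∧ (HH r - HH s) * s ≤ 2 * (r - s) := by
  rcases le_or_gt r aa with hr | hr
  · rw [HH_eq0 hr, HH_eq0 (hsr.trans hr)]
    constructor <;> nlinarith
  · rcases le_or_gt s aa with hsa | hsa
    · rw [HH_eq0 hsa, HH_eq (le_of_lt hr)]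
      have hm : ff aa ≤ ff r := ff_mono (Set.self_mem_Ici) (Set.mem_Ici.mpr hr.le) hr.le
      rw [ff_aa] at hm
      have h1 : 0 ≤ ff r + 3 := by linarith
      constructor
      · linarith
      · have hb := ff_bound (le_refl aa) hr.le
        rw [ff_aa] at hb
        have : (ff r + 3 - 0) * s ≤ (ff r + 3) * aa := by nlinarith
        nlinarith [aa_pos]
    · rw [HH_eq hsa.le, HH_eq (hsa.le.trans hsr)]
      have hm : ff s ≤ ff r := ff_mono (Set.mem_Ici.mpr hsa.le) (Set.mem_Ici.mpr (hsa.le.trans hsr)) hsr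
      have hb := ff_bound hsa.le hsr
      constructor
      · linarith
      · nlinarith

lemma im_identity (u v : ℂ) (p q : ℝ) :
    ((u * (p : ℂ) - v * (q : ℂ)) * (starRingEnd ℂ) (u - v)).im
      = (q - p) * (u * (starRingEnd ℂ) v).im := by
  simp [Complex.mul_im, Complex.mul_re, Complex.sub_re, Complex.sub_im]
  ring

lemma im_bound (u v : ℂ) :
    |(u * (starRingEnd ℂ) v).im| ≤ ‖u - v‖ * ‖v‖ := by
  have e : (u * (starRingEnd ℂ) v).im = ((u - v) * (starRingEnd ℂ) v).im := by
    rw [sub_mul, Complex.sub_im, Complex.mul_conj]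
    simp
  rw [e]
  calc |((u - v) * (starRingEnd ℂ) v).im| ≤ ‖(u - v) * (starRingEnd ℂ) v‖ :=
        Complex.abs_im_le_norm _
    _ = ‖u - v‖ * ‖v‖ := by rw [norm_mul, Complex.norm_conj]

theorem truncated_b_monotone_estimate (b : ℝ → ℝ)
    (hb1 : ∀ x : ℝ, 0 ≤ x → x ≤ Real.exp (-3) → b x = 0)
    (hb2 : ∀ x : ℝ, Real.exp (-3) ≤ x →
      b x = x * Real.log (x ^ 2) + 3 * x + 4 * Real.exp (-3) - Real.exp (-6) / x)
    (B : ℂ → ℂ) (hB0 : B 0 = 0)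
    (hB : ∀ z : ℂ, z ≠ 0 → B z = (z / (‖z‖ : ℂ)) * (b (‖z‖) : ℂ))
    (bn : ℕ → ℂ → ℂ)
    (hbn1 : ∀ (n : ℕ) (z : ℂ), ‖z‖ ≤ (n : ℝ) → bn n z = B z)
    (hbn2 : ∀ (n : ℕ) (z : ℂ), (n : ℝ) ≤ ‖z‖ →
      bn n z = (z / (n : ℂ)) * (b (n : ℝ) : ℂ)) :
    ∃ C : ℝ, 0 < C ∧ ∀ (n : ℕ), 0 < n → ∀ u v : ℂ,
      |((bn n u - bn n v) * (starRingEnd ℂ) (u - v)).im| ≤ C * ‖u - v‖ ^ 2 := by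
  refine ⟨2, by norm_num, ?_⟩
  intro n hn
  have hn0 : (0 : ℝ) < n := by exact_mod_cast hn
  have hbH : ∀ ρ : ℝ, 0 < ρ → b ρ = ρ * HH ρ := by
    intro ρ hρ
    rcases le_or_gt ρ aa with h | h
    · rw [hb1 ρ hρ.le h, HH_eq0 h, mul_zero]
    · rw [hb2 ρ h.le, HH_eq h.le]
      have he6 : Real.exp (-6) = aa ^ 2 := by
        rw [show (-6 : ℝ) = -3 + -3 by norm_num, Real.exp_add]
        unfold aa; ring
      unfold ff
      rw [he6, show Real.log (ρ ^ 2) = 2 * Real.log ρ by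
        rw [Real.log_pow]; push_cast; ring]
      have hρ0 : ρ ≠ 0 := hρ.ne'
      unfold aa
      field_simp
      ring
  have cast_div : ∀ (z : ℂ) (c H : ℝ), c ≠ 0 →
      (z / (c : ℂ)) * (((c * H : ℝ)) : ℂ) = z * ((H : ℝ) : ℂ) := by
    intro z c H hc
    have hc' : (c : ℂ) ≠ 0 := by exact_mod_cast hc
    push_cast
    field_simp
  have hrep : ∀ z : ℂ, bn n z = z * ((HH (min (‖z‖) n) : ℝ) : ℂ) := by
    intro z
    rcases le_total (‖z‖) (n : ℝ) with h | h
    · rw [hbn1 n z h, min_eq_left h]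
      rcases eq_or_ne z 0 with rfl | hz
      · simp [hB0]
      · have hρ : 0 < ‖z‖ := norm_pos_iff.mpr hz
        rw [hB z hz, hbH _ hρ]
        exact cast_div z _ _ hρ.ne'
    · rw [hbn2 n z h, min_eq_right h, hbH _ hn0]
      have e : ((n : ℕ) : ℂ) = (((n : ℝ)) : ℂ) := by push_cast; ring
      rw [e]
      exact cast_div z _ _ hn0.ne'
  have main : ∀ u v : ℂ, ‖v‖ ≤ ‖u‖ →
      |((bn n u - bn n v) * (starRingEnd ℂ) (u - v)).im| ≤ 2 * ‖u - v‖ ^ 2 := by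
    intro u v hvu
    rw [hrep u, hrep v, im_identity]
    have hminle : min (‖v‖) (n : ℝ) ≤ min (‖u‖) (n : ℝ) :=
      min_le_min hvu le_rfl
    have hk := HH_key (le_min (norm_nonneg v) hn0.le) hminle
    have habs : |(HH (min (‖v‖) (n : ℝ)) - HH (min (‖u‖) (n : ℝ))) *
        (u * (starRingEnd ℂ) v).im| =
        (HH (min (‖u‖) (n : ℝ)) - HH (min (‖v‖) (n : ℝ))) *
        |(u * (starRingEnd ℂ) v).im| := by
      rw [abs_mul, abs_sub_comm, abs_of_nonneg hk.1]
    rw [habs]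
    rcases le_or_gt (n : ℝ) (‖v‖) with hcase | hcase
    · have e : min (‖v‖) (n : ℝ) = min (‖u‖) (n : ℝ) := by
        rw [min_eq_right hcase, min_eq_right (hcase.trans hvu)]
      rw [e, sub_self, zero_mul]
      positivity
    · have e1 : min (‖v‖) (n : ℝ) = ‖v‖ := min_eq_left hcase.le
      have e3 : ‖u‖ - ‖v‖ ≤ ‖u - v‖ := by
        simpa using norm_sub_norm_le u v
      have h1 : (HH (min (‖u‖) (n : ℝ)) - HH (min (‖v‖) (n : ℝ))) *
          ‖v‖ ≤ 2 * ‖u - v‖ := by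
        have e2 : min (‖u‖) (n : ℝ) - min (‖v‖) (n : ℝ) ≤
            ‖u‖ - ‖v‖ := by
          have := min_le_left (‖u‖) (n : ℝ)
          rw [e1]; linarith
        calc (HH (min (‖u‖) (n : ℝ)) - HH (min (‖v‖) (n : ℝ))) *
              ‖v‖
            = (HH (min (‖u‖) (n : ℝ)) - HH (min (‖v‖) (n : ℝ))) *
              (min (‖v‖) (n : ℝ)) := by rw [e1]
          _ ≤ 2 * (min (‖u‖) (n : ℝ) - min (‖v‖) (n : ℝ)) := hk.2
          _ ≤ 2 * ‖u - v‖ := by linarith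
      calc (HH (min (‖u‖) (n : ℝ)) - HH (min (‖v‖) (n : ℝ))) *
            |(u * (starRingEnd ℂ) v).im|
          ≤ (HH (min (‖u‖) (n : ℝ)) - HH (min (‖v‖) (n : ℝ))) *
            (‖u - v‖ * ‖v‖) :=
            mul_le_mul_of_nonneg_left (im_bound u v) hk.1
        _ = ((HH (min (‖u‖) (n : ℝ)) - HH (min (‖v‖) (n : ℝ))) *
            ‖v‖) * ‖u - v‖ := by ring
        _ ≤ (2 * ‖u - v‖) * ‖u - v‖ :=
            mul_le_mul_of_nonneg_right h1 (norm_nonneg _)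
        _ = 2 * ‖u - v‖ ^ 2 := by ring
  intro u v
  rcases le_total (‖v‖) (‖u‖) with h | h
  · exact main u v h
  · have e : (bn n u - bn n v) * (starRingEnd ℂ) (u - v) =
        (bn n v - bn n u) * (starRingEnd ℂ) (v - u) := by
      rw [map_sub, map_sub]; ring
    have e2 : ‖u - v‖ = ‖v - u‖ := by
      rw [norm_sub_rev]
    rw [e, e2]
    exact main v u h
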